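/- Let r ∈ ℕ and n ∈ ℕ_+ with n ≥ r. Then (r+1)!·L(n, r+1) = Σ_{k=1}^n C(n,k)·k·D_r(n-k), where L(n,k) = (n!/k!)·C(n-1, k-1) are the Lah numbers. -/

import Mathlib

/-- The `r`-derangement number `D_r(n)`: the number of fixed-point-free permutations
of `n + r` elements such that the first `r` (distinguished) elements lie in pairwise
distinct cycles of the cycle decomposition. -/
noncomputable def rDerangement (r n : ℕ) : ℕ :=
  Nat.card {σ : Equiv.Perm (Fin (n + r)) //
    (∀ x, σ x ≠ x) ∧
    ∀ i j : Fin (n + r), (i : ℕ) < r → (j : ℕ) < r → i ≠ j → ¬ σ.SameCycle i j}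

/-- The Lah number `L(n,k) = (n!/k!) * C(n-1, k-1)` (as a rational number). -/
def lah (n k : ℕ) : ℚ :=
  (n.factorial : ℚ) / k.factorial * (n - 1).choose (k - 1)

open Equiv Equiv.Perm Finset
set_option linter.unusedSectionVars false
set_option linter.unusedVariables false

variable {α β : Type*}

/-- distinct cycle condition on a finset of special points -/
def distCond (S : Finset α) (σ : Equiv.Perm α) : Prop :=
  ∀ i ∈ S, ∀ j ∈ S, i ≠ j → ¬ σ.SameCycle i j

def derCond (σ : Equiv.Perm α) : Prop := ∀ x, σ x ≠ x

/-- permCongr as a MulEquiv -/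
def permCongrMul (e : α ≃ β) : Equiv.Perm α ≃* Equiv.Perm β :=
  { e.permCongr with
    map_mul' := fun τ υ => by
      ext x
      simp [Equiv.permCongr_apply, Equiv.Perm.mul_apply] }

lemma permCongr_zpow (e : α ≃ β) (σ : Equiv.Perm α) (k : ℤ) :
    (e.permCongr σ) ^ k = e.permCongr (σ ^ k) :=
  (map_zpow (permCongrMul e) σ k).symm

lemma sameCycle_permCongr (e : α ≃ β) {σ : Equiv.Perm α} {x y : α} :
    (e.permCongr σ).SameCycle (e x) (e y) ↔ σ.SameCycle x y := by
  constructor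
  · rintro ⟨k, hk⟩
    refine ⟨k, e.injective ?_⟩
    rw [permCongr_zpow] at hk
    simpa [Equiv.permCongr_apply] using hk
  · rintro ⟨k, hk⟩
    exact ⟨k, by rw [permCongr_zpow]; simp [Equiv.permCongr_apply, hk]⟩

lemma sameCycle_removeNone [Finite α] (σ : Equiv.Perm (Option α)) (a b : α) :
    Equiv.Perm.SameCycle (Equiv.removeNone σ) a b ↔ σ.SameCycle (some a) (some b) := by
  haveI := Fintype.ofFinite α
  haveI : Finite (Option α) := inferInstance
  have step : ∀ c : α, σ.SameCycle (some c) (some (Equiv.removeNone σ c)) := by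
    intro c
    rcases h : σ (some c) with _ | d
    · have h2 := Equiv.removeNone_none σ h
      have : σ.SameCycle (some c) (σ (σ (some c))) :=
        (Equiv.Perm.SameCycle.refl _ _).apply_right.apply_right
      rwa [h, ← h2] at this
    · have h2 := Equiv.removeNone_some σ ⟨d, h⟩
      have : σ.SameCycle (some c) (σ (some c)) :=
        (Equiv.Perm.SameCycle.refl _ _).apply_right
      rwa [← h2] at this
  constructor
  · intro h
    obtain ⟨n, -, hn⟩ := h.exists_pow_eq'
    subst hn
    clear h
    induction n generalizing a with
    | zero => simpa using Equiv.Perm.SameCycle.refl σ (some a)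
    | succ n ih =>
      rw [pow_succ]
      have h1 := step a
      have h2 := ih (Equiv.removeNone σ a)
      simpa [Equiv.Perm.mul_apply] using h1.trans h2
  · intro h
    obtain ⟨n, -, hn⟩ := h.exists_pow_eq'
    clear h
    induction n using Nat.strong_induction_on generalizing a with
    | _ n ih =>
      match n, hn with
      | 0, hn =>
        simp only [pow_zero, Equiv.Perm.one_apply, Option.some.injEq] at hn
        exact hn ▸ Equiv.Perm.SameCycle.refl _ _
      | (n+1), hn =>
        rcases h : σ (some a) with _ | c
        · match n, hn with
          | 0, hn => rw [pow_one, h] at hn; exact absurd hn (by simp)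
          | (k+1), hn =>
            have hnone : σ none ≠ none := fun hc => by
              have := σ.injective (h.trans hc.symm); simp at this
            rcases h' : σ none with _ | c'
            · exact absurd h' hnone
            · have hrm : Equiv.removeNone σ a = c' := by
                have := Equiv.removeNone_none σ h
                rw [h'] at this; exact Option.some_injective _ this
              have hk : (σ ^ k) (some c') = some b := by
                rw [pow_succ, pow_succ, Equiv.Perm.mul_apply, Equiv.Perm.mul_apply, h] at hn
                rwa [h'] at hn
              have h1 : Equiv.Perm.SameCycle (Equiv.removeNone σ) c' b := ih k (by omega) c' hk
              have h2 : Equiv.Perm.SameCycle (Equiv.removeNone σ) a c' :=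
                hrm ▸ ⟨1, by simp⟩
              exact h2.trans h1
        · have hrm : Equiv.removeNone σ a = c := by
            have := Equiv.removeNone_some σ ⟨c, h⟩
            rw [h] at this; exact Option.some_injective _ this
          have hk : (σ ^ n) (some c) = some b := by
            rw [pow_succ, Equiv.Perm.mul_apply, h] at hn; exact hn
          have h1 : Equiv.Perm.SameCycle (Equiv.removeNone σ) c b := ih n (by omega) c hk
          have h2 : Equiv.Perm.SameCycle (Equiv.removeNone σ) a c := hrm ▸ ⟨1, by simp⟩
          exact h2.trans h1

noncomputable def Dcard (α : Type*) [Fintype α] (S : Finset α) : ℕ :=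
  Nat.card {σ : Equiv.Perm α // derCond σ ∧ distCond S σ}

noncomputable def Acard (α : Type*) [Fintype α] (S : Finset α) : ℕ :=
  Nat.card {σ : Equiv.Perm α // distCond S σ}

variable [Fintype α] [Fintype β] [DecidableEq α] [DecidableEq β]

lemma derCond_permCongr (e : α ≃ β) (σ : Equiv.Perm α) :
    derCond (e.permCongr σ) ↔ derCond σ := by
  constructor
  · intro h x hx
    exact h (e x) (by simp [Equiv.permCongr_apply, hx])
  · intro h z hz
    simp only [Equiv.permCongr_apply] at hz
    exact h (e.symm z) (e.injective (by simpa using hz))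

lemma distCond_permCongr (e : α ≃ β) (σ : Equiv.Perm α) {S : Finset α} {T : Finset β}
    (hST : ∀ x, x ∈ S ↔ e x ∈ T) :
    distCond T (e.permCongr σ) ↔ distCond S σ := by
  constructor
  · intro h i hi j hj hij hsc
    exact h (e i) ((hST i).1 hi) (e j) ((hST j).1 hj) (fun hc => hij (e.injective hc))
      ((sameCycle_permCongr e).2 hsc)
  · intro h i hi j hj hij hsc
    have hi' : e (e.symm i) ∈ T := by simpa using hi
    have hj' : e (e.symm j) ∈ T := by simpa using hj
    refine h (e.symm i) ((hST _).2 hi') (e.symm j) ((hST _).2 hj')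
      (fun hc => hij (by simpa using congrArg e hc)) ?_
    rw [← sameCycle_permCongr e (σ := σ)]
    simpa using hsc

lemma dcard_congr (e : α ≃ β) {S : Finset α} {T : Finset β}
    (hST : ∀ x, x ∈ S ↔ e x ∈ T) : Dcard α S = Dcard β T := by
  apply Nat.card_congr
  exact (e.permCongr).subtypeEquiv fun σ => by
    rw [derCond_permCongr e σ, distCond_permCongr e σ hST]

lemma acard_congr (e : α ≃ β) {S : Finset α} {T : Finset β}
    (hST : ∀ x, x ∈ S ↔ e x ∈ T) : Acard α S = Acard β T := by
  apply Nat.card_congr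
  exact (e.permCongr).subtypeEquiv fun σ => (distCond_permCongr e σ hST).symm

lemma acard_univ : Acard α (univ : Finset α) = 1 := by
  rw [Acard, Nat.card_eq_one_iff_unique]
  constructor
  · constructor
    intro σ τ
    have key : ∀ ρ : {σ : Equiv.Perm α // distCond univ σ}, (ρ : Equiv.Perm α) = 1 := by
      rintro ⟨ρ, hρ⟩
      ext x
      by_contra hx
      exact hρ x (mem_univ _) (ρ x) (mem_univ _) (fun hc => hx hc.symm)
        (Equiv.Perm.SameCycle.refl _ _).apply_right
    exact Subtype.ext ((key σ).trans (key τ).symm)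
  · exact ⟨⟨1, fun i _ j _ hij hsc => hij (by simpa using hsc)⟩⟩

lemma acard_option (S : Finset α) :
    Acard (Option α) (S.map Function.Embedding.some) = (Fintype.card α + 1) * Acard α S := by
  have e1 : {σ : Equiv.Perm (Option α) // distCond (S.map Function.Embedding.some) σ} ≃
      {x : Option α × Equiv.Perm α // distCond S x.2} :=
    Equiv.Perm.decomposeOption.subtypeEquiv fun σ => by
      simp only [Equiv.Perm.decomposeOption_apply]
      constructor
      · intro h i hi j hj hij hsc
        refine h (some i) (mem_map_of_mem _ hi) (some j) (mem_map_of_mem _ hj)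
          (by simpa using hij) ?_
        exact (sameCycle_removeNone σ i j).1 hsc
      · intro h i hi j hj hij hsc
        obtain ⟨i', hi', rfl⟩ := Finset.mem_map.1 hi
        obtain ⟨j', hj', rfl⟩ := Finset.mem_map.1 hj
        exact h i' hi' j' hj' (by simpa using hij)
          ((sameCycle_removeNone σ i' j').2 hsc)
  have e2 : {x : Option α × Equiv.Perm α // distCond S x.2} ≃
      Option α × {τ : Equiv.Perm α // distCond S τ} :=
    { toFun := fun x => (x.1.1, ⟨x.1.2, x.2⟩)
      invFun := fun y => ⟨(y.1, y.2.1), y.2.2⟩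
      left_inv := fun x => rfl
      right_inv := fun y => rfl }
  rw [Acard, Nat.card_congr (e1.trans e2), Nat.card_prod, Nat.card_eq_fintype_card,
    Fintype.card_option, Acard]

/-- the first `r` elements of `Fin N` -/
def sp (N r : ℕ) : Finset (Fin N) := univ.filter (fun x => (x : ℕ) < r)

lemma mem_sp {N r : ℕ} {x : Fin N} : x ∈ sp N r ↔ (x : ℕ) < r := by
  simp [sp]

lemma sp_card (N r : ℕ) (h : r ≤ N) : (sp N r).card = r := by
  have : sp N r = (Finset.range r).attachFin
      (fun m hm => lt_of_lt_of_le (Finset.mem_range.1 hm) h) := by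
    ext x
    simp [mem_sp, Finset.mem_attachFin]
  rw [this, Finset.card_attachFin, Finset.card_range]

lemma acard_succ (N r : ℕ) (h : r ≤ N) :
    Acard (Fin (N + 1)) (sp (N + 1) r) = (N + 1) * Acard (Fin N) (sp N r) := by
  have hmap : ∀ x : Fin (N + 1),
      x ∈ sp (N + 1) r ↔ finSuccEquivLast x ∈ (sp N r).map Function.Embedding.some := by
    intro x
    induction x using Fin.lastCases with
    | last =>
      simp only [finSuccEquivLast_last, mem_sp]
      simp only [Fin.val_last]
      constructor
      · intro hx; omega
      · intro hx; simp at hx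
    | cast i =>
      simp only [finSuccEquivLast_castSucc, mem_sp, Fin.coe_castSucc]
      constructor
      · intro hx
        exact Finset.mem_map_of_mem _ (mem_sp.2 hx)
      · intro hx
        obtain ⟨i', hi', hii⟩ := Finset.mem_map.1 hx
        simp only [Function.Embedding.some_apply, Option.some.injEq] at hii
        subst hii
        exact mem_sp.1 hi'
  rw [acard_congr finSuccEquivLast hmap, acard_option, Fintype.card_fin]

lemma acard_fact (r : ℕ) : ∀ m : ℕ,
    Acard (Fin (m + r)) (sp (m + r) r) * r.factorial = (m + r).factorial := by
  intro m
  induction m with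
  | zero =>
    have h1 : sp (0 + r) r = univ := by
      ext x
      simpa [mem_sp] using by omega
    rw [h1, acard_univ, one_mul, Nat.zero_add]
  | succ m ih =>
    rw [show m + 1 + r = m + r + 1 by omega]
    rw [acard_succ (m + r) r (by omega)]
    rw [Nat.factorial_succ, mul_assoc, ih]

lemma sameCycle_fixed {σ : Equiv.Perm α} {x y : α} (hx : σ x = x) (h : σ.SameCycle x y) :
    y = x := by
  obtain ⟨k, hk⟩ := h
  rw [Equiv.Perm.zpow_apply_eq_self_of_apply_eq_self hx k] at hk
  exact hk.symm

def fiber_equiv (S F : Finset α) :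
    {σ : Equiv.Perm α // distCond S σ ∧ univ.filter (fun x => σ x = x) = F} ≃
    {τ : Equiv.Perm {x : α // x ∉ F} //
      derCond τ ∧ distCond (univ.filter fun x : {x : α // x ∉ F} => (x : α) ∈ S) τ} where
  toFun := fun ⟨σ, hd, h2⟩ => by
    have hF : ∀ x, σ x = x ↔ x ∈ F := fun x => by
      simpa using (Finset.ext_iff.1 h2 x)
    have hmem : ∀ x, (x ∉ F) ↔ (σ x ∉ F) := by
      intro x
      rw [← hF, ← hF]
      constructor
      · intro h hc
        exact h (σ.injective hc)
      · intro h hc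
        exact h (by rw [hc, hc])
    refine ⟨σ.subtypePerm (fun x => (hmem x).symm), ?_, ?_⟩
    · rintro ⟨x, hx⟩ hc
      rw [← hF] at hx
      exact hx (congrArg Subtype.val hc)
    · rintro ⟨x, hx⟩ hxS ⟨y, hy⟩ hyS hxy hsc
      rw [Equiv.Perm.sameCycle_subtypePerm] at hsc
      simp only [Finset.mem_filter] at hxS hyS
      exact hd x hxS.2 y hyS.2 (fun hc => hxy (Subtype.ext hc)) hsc
  invFun := fun ⟨τ, hder, hdist⟩ => by
    refine ⟨τ.extendDomain (Equiv.refl {x : α // x ∉ F}), ?_, ?_⟩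
    · intro i hi j hj hij hsc
      by_cases hiF : i ∈ F
      · have hfix : (τ.extendDomain (Equiv.refl {x : α // x ∉ F})) i = i :=
          Equiv.Perm.extendDomain_apply_not_subtype _ _ (by simpa using hiF)
        exact hij (sameCycle_fixed hfix hsc).symm
      · by_cases hjF : j ∈ F
        · have hfix : (τ.extendDomain (Equiv.refl {x : α // x ∉ F})) j = j :=
            Equiv.Perm.extendDomain_apply_not_subtype _ _ (by simpa using hjF)
          exact hij (sameCycle_fixed hfix hsc.symm)
        · have hsc' : τ.SameCycle ⟨i, hiF⟩ ⟨j, hjF⟩ := by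
            have := (Equiv.Perm.sameCycle_extendDomain
              (g := τ) (f := Equiv.refl {x : α // x ∉ F})
              (x := ⟨i, hiF⟩) (y := ⟨j, hjF⟩)).1
            exact this (by simpa using hsc)
          exact hdist ⟨i, hiF⟩ (by simp [hi]) ⟨j, hjF⟩ (by simp [hj])
            (fun hc => hij (congrArg Subtype.val hc)) hsc'
    · ext x
      simp only [Finset.mem_filter, Finset.mem_univ, true_and]
      by_cases hxF : x ∈ F
      · simp only [hxF, iff_true]
        exact Equiv.Perm.extendDomain_apply_not_subtype _ _ (by simpa using hxF)
      · simp only [hxF, iff_false]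
        have : (τ.extendDomain (Equiv.refl {x : α // x ∉ F})) x = (τ ⟨x, hxF⟩ : α) := by
          have := Equiv.Perm.extendDomain_apply_subtype τ
            (Equiv.refl {x : α // x ∉ F}) (b := x) hxF
          simpa using this
        rw [this]
        intro hc
        exact hder ⟨x, hxF⟩ (Subtype.ext hc)
  left_inv := by
    rintro ⟨σ, hd, h2⟩
    have hF : ∀ x, σ x = x ↔ x ∈ F := fun x => by
      simpa using (Finset.ext_iff.1 h2 x)
    apply Subtype.ext
    simp only
    ext x
    by_cases hxF : x ∈ F
    · rw [Equiv.Perm.extendDomain_apply_not_subtype _ _ (by simpa using hxF)]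
      exact ((hF x).2 hxF).symm
    · have := Equiv.Perm.extendDomain_apply_subtype
        (σ.subtypePerm (fun z => Iff.symm ((show ∀ y, (y ∉ F) ↔ (σ y ∉ F) by
          intro y
          rw [← hF, ← hF]
          constructor
          · intro h hc; exact h (σ.injective hc)
          · intro h hc; exact h (by rw [hc, hc])) z)))
        (Equiv.refl {x : α // x ∉ F}) (b := x) hxF
      simpa using this
  right_inv := by
    rintro ⟨τ, hder, hdist⟩
    apply Subtype.ext
    simp only
    ext ⟨x, hxF⟩
    have h1 : (τ.extendDomain (Equiv.refl {x : α // x ∉ F})) x = (τ ⟨x, hxF⟩ : α) := by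
      have := Equiv.Perm.extendDomain_apply_subtype τ
        (Equiv.refl {x : α // x ∉ F}) (b := x) hxF
      simpa using this
    simp only [Equiv.Perm.subtypePerm_apply]
    exact h1

instance (S : Finset α) (σ : Equiv.Perm α) : Decidable (distCond S σ) := by
  unfold distCond; infer_instance

instance (σ : Equiv.Perm α) : Decidable (derCond σ) := by
  unfold derCond; infer_instance

lemma acard_sum (S : Finset α) :
    Acard α S = ∑ F : Finset α,
      Dcard {x : α // x ∉ F} (univ.filter fun x : {x : α // x ∉ F} => (x : α) ∈ S) := by
  rw [Acard, Nat.card_eq_fintype_card]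
  rw [Fintype.card_congr (Equiv.sigmaFiberEquiv
    (fun σ : {σ : Equiv.Perm α // distCond S σ} =>
      univ.filter (fun x => (σ : Equiv.Perm α) x = x))).symm]
  rw [Fintype.card_sigma]
  refine Finset.sum_congr rfl fun F _ => ?_
  rw [Fintype.card_congr ((Equiv.subtypeSubtypeEquivSubtypeInter _ _).trans (fiber_equiv S F))]
  rw [Dcard, Nat.card_eq_fintype_card]

lemma dcard_eq (S : Finset α) (M t : ℕ) (hM : Fintype.card α = M) (ht : S.card = t) :
    Dcard α S = Dcard (Fin M) (sp M t) := by
  have htM : t ≤ M := by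
    have h0 := Finset.card_le_univ S
    omega
  have hc1 : Fintype.card {x : α // x ∈ S} = t := by
    rw [← ht]; exact Fintype.card_coe S
  have hc2 : Fintype.card {x : α // x ∉ S} = M - t := by
    rw [Fintype.card_subtype_compl, hc1, hM]
  have e1 : {x : α // x ∈ S} ≃ Fin t := Fintype.equivFinOfCardEq hc1
  have e2 : {x : α // x ∉ S} ≃ Fin (M - t) := Fintype.equivFinOfCardEq hc2
  refine dcard_congr ((Equiv.sumCompl (· ∈ S)).symm.trans ((e1.sumCongr e2).trans
      (finSumFinEquiv.trans (finCongr (by omega : t + (M - t) = M))))) fun x => ?_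
  rw [mem_sp]
  by_cases hx : x ∈ S
  · simp only [Equiv.trans_apply, Equiv.sumCompl_symm_apply_of_pos hx,
      Equiv.sumCongr_apply, Sum.map_inl, finSumFinEquiv_apply_left, finCongr_apply,
      Fin.coe_cast, Fin.coe_castAdd]
    simp [hx, (e1 ⟨x, hx⟩).isLt]
  · simp only [Equiv.trans_apply, Equiv.sumCompl_symm_apply_of_neg hx,
      Equiv.sumCongr_apply, Sum.map_inr, finSumFinEquiv_apply_right, finCongr_apply,
      Fin.coe_cast, Fin.coe_natAdd]
    constructor
    · intro h; exact absurd h hx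
    · intro h; omega

lemma rDerangement_eq (ρ μ : ℕ) :
    rDerangement ρ μ = Dcard (Fin (μ + ρ)) (sp (μ + ρ) ρ) := by
  apply Nat.card_congr
  apply Equiv.subtypeEquivRight
  intro σ
  constructor
  · rintro ⟨h1, h2⟩
    exact ⟨h1, fun i hi j hj hij => h2 i j (mem_sp.1 hi) (mem_sp.1 hj) hij⟩
  · rintro ⟨h1, h2⟩
    exact ⟨h1, fun i j hi hj hij => h2 i (mem_sp.2 hi) j (mem_sp.2 hj) hij⟩

lemma key_sum (m r : ℕ) :
    Acard (Fin (m + r)) (sp (m + r) r) =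
      ∑ s ∈ Finset.range (r + 1), ∑ j ∈ Finset.range (m + 1),
        r.choose s * (m.choose j * rDerangement (r - s) (m - j)) := by
  set N := m + r with hN
  set S := sp N r with hS
  have hrN : r ≤ N := by omega
  have hScard : S.card = r := sp_card N r hrN
  have hSccard : Sᶜ.card = m := by
    rw [Finset.card_compl, hScard]
    simp [hN]
  -- step 1 : fibration
  rw [acard_sum S]
  -- step 2 : evaluate each fiber
  have hfiber : ∀ F : Finset (Fin N),
      Dcard {x : Fin N // x ∉ F} (univ.filter fun x : {x : Fin N // x ∉ F} => (x : Fin N) ∈ S)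
        = rDerangement ((S \ F).card) (N - F.card - (S \ F).card) := by
    intro F
    have hM : Fintype.card {x : Fin N // x ∉ F} = N - F.card := by
      rw [Fintype.card_subtype_compl]
      congr 1
      · exact Fintype.card_fin N
      · rw [Fintype.card_coe]
    have himg : (univ.filter fun x : {x : Fin N // x ∉ F} => (x : Fin N) ∈ S).image
        (Subtype.val) = S \ F := by
      ext y
      simp only [Finset.mem_image, Finset.mem_filter, Finset.mem_univ, true_and,
        Finset.mem_sdiff, Subtype.exists]
      constructor
      · rintro ⟨a, ha, haS, rfl⟩
        exact ⟨haS, ha⟩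
      · rintro ⟨h1, h2⟩
        exact ⟨y, h2, h1, rfl⟩
    have ht : (univ.filter fun x : {x : Fin N // x ∉ F} => (x : Fin N) ∈ S).card
        = (S \ F).card := by
      rw [← himg, Finset.card_image_of_injective _ Subtype.val_injective]
    have htle : (S \ F).card ≤ N - F.card := by
      have h1 : S \ F ⊆ univ \ F := Finset.sdiff_subset_sdiff (Finset.subset_univ S)
        (le_refl F)
      have h2 := Finset.card_le_card h1
      have h3 : (univ \ F).card = N - F.card := by
        rw [Finset.card_sdiff_of_subset (Finset.subset_univ F), Finset.card_univ, Fintype.card_fin]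
      omega
    rw [dcard_eq _ (N - F.card) ((S \ F).card) hM ht]
    conv_lhs => rw [show N - F.card = (N - F.card - (S \ F).card) + (S \ F).card from by omega]
    rw [← rDerangement_eq]
  rw [Finset.sum_congr rfl fun F _ => hfiber F]
  -- step 3 : reindex over pairs of subsets
  rw [Finset.sum_nbij' (i := fun F : Finset (Fin N) => (F ∩ S, F \ S))
    (j := fun p : Finset (Fin N) × Finset (Fin N) => p.1 ∪ p.2)
    (t := S.powerset ×ˢ Sᶜ.powerset)
    (g := fun p : Finset (Fin N) × Finset (Fin N) =>
      rDerangement (r - p.1.card) (m - p.2.card))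
    (hi := fun F _ => by
      simp only [Finset.mem_product, Finset.mem_powerset]
      exact ⟨Finset.inter_subset_right, fun x hx => by
        rw [Finset.mem_compl]; exact (Finset.mem_sdiff.1 hx).2⟩)
    (hj := fun p _ => Finset.mem_univ _)
    (left_neg := fun F _ => by
      ext x
      simp only [Finset.mem_union, Finset.mem_inter, Finset.mem_sdiff]
      tauto)
    (right_neg := fun p hp => by
      simp only [Finset.mem_product, Finset.mem_powerset] at hp
      obtain ⟨h1, h2⟩ := hp
      have hd : ∀ x ∈ p.2, x ∉ S := fun x hx => Finset.mem_compl.1 (h2 hx)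
      have e1 : (p.1 ∪ p.2) ∩ S = p.1 := by
        ext x
        simp only [Finset.mem_inter, Finset.mem_union]
        constructor
        · rintro ⟨hx1 | hx2, hxS⟩
          · exact hx1
          · exact absurd hxS (hd x hx2)
        · intro hx
          exact ⟨Or.inl hx, h1 hx⟩
      have e2 : (p.1 ∪ p.2) \ S = p.2 := by
        ext x
        simp only [Finset.mem_sdiff, Finset.mem_union]
        constructor
        · rintro ⟨hx1 | hx2, hxS⟩
          · exact absurd (h1 hx1) hxS
          · exact hx2
        · intro hx
          exact ⟨Or.inr hx, hd x hx⟩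
      exact Prod.ext e1 e2)
    (h := fun F _ => by
      dsimp only
      have c1 : (S \ F).card = r - (F ∩ S).card := by
        have : S \ F = S \ (F ∩ S) := by
          ext x; simp only [Finset.mem_sdiff, Finset.mem_inter]; tauto
        rw [this, Finset.card_sdiff_of_subset Finset.inter_subset_right, hScard]
      have c2 : F.card = (F ∩ S).card + (F \ S).card := by
        rw [← Finset.card_inter_add_card_sdiff F S]
      have c3 : (F ∩ S).card ≤ r := by
        rw [← hScard]; exact Finset.card_le_card Finset.inter_subset_right
      have c4 : (F \ S).card ≤ m := by
        rw [← hSccard]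
        refine Finset.card_le_card fun x hx => ?_
        rw [Finset.mem_compl]; exact (Finset.mem_sdiff.1 hx).2
      rw [c1]
      congr 1
      omega)]
  -- step 4 : split the product sum and group by cardinality
  rw [Finset.sum_product]
  rw [Finset.sum_powerset S (fun F1 => ∑ F2 ∈ Sᶜ.powerset,
    rDerangement (r - F1.card) (m - F2.card))]
  rw [hScard]
  refine Finset.sum_congr rfl fun s' hs' => ?_
  have hinner : ∀ F1 ∈ Finset.powersetCard s' S,
      (∑ F2 ∈ Sᶜ.powerset, rDerangement (r - F1.card) (m - F2.card))
        = ∑ j ∈ Finset.range (m + 1), m.choose j * rDerangement (r - s') (m - j) := by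
    intro F1 hF1
    have hF1card : F1.card = s' := (Finset.mem_powersetCard.1 hF1).2
    rw [hF1card]
    rw [Finset.sum_powerset Sᶜ (fun F2 => rDerangement (r - s') (m - F2.card))]
    rw [hSccard]
    refine Finset.sum_congr rfl fun j hj => ?_
    have : ∀ F2 ∈ Finset.powersetCard j Sᶜ,
        rDerangement (r - s') (m - F2.card) = rDerangement (r - s') (m - j) := by
      intro F2 hF2
      rw [(Finset.mem_powersetCard.1 hF2).2]
    rw [Finset.sum_congr rfl this, Finset.sum_const, Finset.card_powersetCard, hSccard,
      smul_eq_mul]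
  rw [Finset.sum_congr rfl hinner, Finset.sum_const, Finset.card_powersetCard, hScard,
    smul_eq_mul, Finset.mul_sum]

noncomputable def Ecard (ρ m : ℕ) : ℕ :=
  ∑ j ∈ Finset.range (m + 1), m.choose j * rDerangement ρ (m - j)

lemma H1 (m r : ℕ) :
    (∑ s ∈ Finset.range (r + 1), r.choose s * Ecard (r - s) m) * r.factorial
      = (m + r).factorial := by
  have ha := acard_fact r m
  rw [key_sum m r] at ha
  rw [← ha]
  congr 1
  exact Finset.sum_congr rfl fun s _ => by rw [Ecard, Finset.mul_sum]

lemma H2 (m r : ℕ) :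
    (∑ s ∈ Finset.range (r + 1), r.choose s * (m.factorial * m.choose (r - s)))
      * r.factorial = (m + r).factorial := by
  have hv : ∑ s ∈ Finset.range (r + 1), r.choose s * m.choose (r - s)
      = (r + m).choose r := by
    rw [Nat.add_choose_eq r m r]
    rw [Finset.Nat.sum_antidiagonal_eq_sum_range_succ_mk]
  have : ∑ s ∈ Finset.range (r + 1), r.choose s * (m.factorial * m.choose (r - s))
      = m.factorial * ((r + m).choose r) := by
    rw [← hv, Finset.mul_sum]
    exact Finset.sum_congr rfl fun s _ => by ring
  rw [this]
  have := Nat.choose_mul_factorial_mul_factorial (show r ≤ r + m by omega)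
  rw [Nat.add_sub_cancel_left] at this
  calc m.factorial * (r + m).choose r * r.factorial
      = (r + m).choose r * r.factorial * m.factorial := by ring
    _ = (r + m).factorial := this
    _ = (m + r).factorial := by rw [Nat.add_comm]

lemma ecard_eq (m : ℕ) : ∀ r : ℕ, Ecard r m = m.factorial * m.choose r := by
  intro r
  induction r using Nat.strong_induction_on with
  | _ r ih =>
    have h1 := H1 m r
    have h2 := H2 m r
    rw [Finset.sum_range_succ'] at h1 h2
    have hshift : ∑ i ∈ Finset.range r, r.choose (i + 1) * Ecard (r - (i + 1)) m
        = ∑ i ∈ Finset.range r, r.choose (i + 1) * (m.factorial * m.choose (r - (i + 1))) :=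
      Finset.sum_congr rfl fun i hi => by
        rw [ih (r - (i + 1)) (by have := Finset.mem_range.1 hi; omega)]
    rw [hshift] at h1
    simp only [Nat.choose_zero_right, Nat.sub_zero, one_mul] at h1 h2
    have hr := Nat.factorial_pos r
    have := h1.trans h2.symm
    have h3 := Nat.eq_of_mul_eq_mul_right hr this
    omega

lemma final_nat (r n : ℕ) (hn : 0 < n) :
    ∑ k ∈ Finset.Icc 1 n, n.choose k * k * rDerangement r (n - k)
      = n * ((n - 1).factorial * (n - 1).choose r) := by
  have hreindex : ∑ k ∈ Finset.Icc 1 n, n.choose k * k * rDerangement r (n - k)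
      = ∑ j ∈ Finset.range n, n.choose (1 + j) * (1 + j) * rDerangement r (n - (1 + j)) := by
    rw [Finset.sum_nbij' (i := fun k => k - 1) (j := fun j => j + 1)
      (t := Finset.range n)
      (g := fun j => n.choose (1 + j) * (1 + j) * rDerangement r (n - (1 + j)))
      (hi := fun k hk => by
        have := Finset.mem_Icc.1 hk
        exact Finset.mem_range.2 (by omega))
      (hj := fun j hj => by
        have := Finset.mem_range.1 hj
        exact Finset.mem_Icc.2 (by omega))
      (left_neg := fun k hk => by
        have := Finset.mem_Icc.1 hk
        omega)
      (right_neg := fun j _ => by omega)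
      (h := fun k hk => by
        have := Finset.mem_Icc.1 hk
        rw [show 1 + (k - 1) = k from by omega])]
  rw [hreindex]
  have hterm : ∀ j ∈ Finset.range n,
      n.choose (1 + j) * (1 + j) * rDerangement r (n - (1 + j))
        = n * ((n - 1).choose j * rDerangement r (n - 1 - j)) := by
    intro j hj
    have hc := Nat.add_one_mul_choose_eq (n - 1) j
    rw [show n - 1 + 1 = n by omega] at hc
    rw [show n - (1 + j) = n - 1 - j by omega, show 1 + j = j + 1 by omega]
    calc n.choose (j + 1) * (j + 1) * rDerangement r (n - 1 - j)
        = (n.choose (j + 1) * (j + 1)) * rDerangement r (n - 1 - j) := by ring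
      _ = (n * (n - 1).choose j) * rDerangement r (n - 1 - j) := by rw [← hc]
      _ = n * ((n - 1).choose j * rDerangement r (n - 1 - j)) := by ring
  rw [Finset.sum_congr rfl hterm, ← Finset.mul_sum]
  congr 1
  have := ecard_eq (n - 1) r
  rw [Ecard] at this
  rw [show n - 1 + 1 = n by omega] at this
  exact this

theorem lah_eq_sum_rDerangement (r n : ℕ) (hn : 0 < n) (hrn : r ≤ n) :
    ((r + 1).factorial : ℚ) * lah n (r + 1) =
      ∑ k ∈ Finset.Icc 1 n, (n.choose k : ℚ) * k * rDerangement r (n - k) := by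
  have hcast : (((∑ k ∈ Finset.Icc 1 n, n.choose k * k * rDerangement r (n - k)) : ℕ) : ℚ)
      = ∑ k ∈ Finset.Icc 1 n, (n.choose k : ℚ) * k * rDerangement r (n - k) := by
    push_cast
    rfl
  rw [← hcast, final_nat r n hn]
  rw [lah]
  have hfac : (n.factorial : ℚ) = n * (n - 1).factorial := by
    rw [← Nat.mul_factorial_pred hn.ne']
    push_cast
    ring
  have h1 : (r + 1) - 1 = r := by omega
  rw [h1, hfac]
  have hne : ((r + 1).factorial : ℚ) ≠ 0 := by
    exact_mod_cast Nat.factorial_ne_zero (r + 1)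
  field_simp
  push_cast
  ring
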